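/- Let n ≥ 1 and s ∈ ℝ. For every C¹ vector field Y on ℝⁿ with compact support contained in ℝⁿ ∖ {0}, one has ∫ r^{−2s−n+1} S(Y)(x̂, x̂) ⟨x̂, Y⟩ dx = s ∫ r^{−2s−n} ⟨x̂, Y⟩² dx, where r = ‖x‖ and x̂ = x/‖x‖. -/

import Mathlib

open MeasureTheory Real

/-- The `i`-th partial derivative of a function on `ℝⁿ`. -/
noncomputable def pd (n : ℕ) (f : EuclideanSpace ℝ (Fin n) → ℝ)
    (i : Fin n) (x : EuclideanSpace ℝ (Fin n)) : ℝ :=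
  fderiv ℝ f x (EuclideanSpace.single i 1)

/-- The squared Euclidean norm of the gradient, `|∇f|² = Σᵢ (∂ᵢf)²`. -/
noncomputable def gradSq (n : ℕ) (f : EuclideanSpace ℝ (Fin n) → ℝ)
    (x : EuclideanSpace ℝ (Fin n)) : ℝ :=
  ∑ i, (pd n f i x) ^ 2

/-- The Euclidean Laplacian, `Δf = Σᵢ ∂ᵢ²f`. -/
noncomputable def lap (n : ℕ) (f : EuclideanSpace ℝ (Fin n) → ℝ)
    (x : EuclideanSpace ℝ (Fin n)) : ℝ :=
  ∑ i, pd n (pd n f i) i x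

/-- The partial derivative `∂ᵢYⱼ` of a vector field `Y` on `ℝⁿ`. -/
noncomputable def vpd (n : ℕ)
    (Y : EuclideanSpace ℝ (Fin n) → EuclideanSpace ℝ (Fin n))
    (i j : Fin n) (x : EuclideanSpace ℝ (Fin n)) : ℝ :=
  fderiv ℝ (fun y => Y y j) x (EuclideanSpace.single i 1)

/-- The symmetrized gradient `S(Y)ᵢⱼ = (∂ᵢYⱼ + ∂ⱼYᵢ)/2` of a vector field. -/
noncomputable def symGrad (n : ℕ)
    (Y : EuclideanSpace ℝ (Fin n) → EuclideanSpace ℝ (Fin n))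
    (i j : Fin n) (x : EuclideanSpace ℝ (Fin n)) : ℝ :=
  (vpd n Y i j x + vpd n Y j i x) / 2

/-- The divergence `div Y = Σᵢ ∂ᵢYᵢ` of a vector field on `ℝⁿ`. -/
noncomputable def diverg (n : ℕ)
    (Y : EuclideanSpace ℝ (Fin n) → EuclideanSpace ℝ (Fin n))
    (x : EuclideanSpace ℝ (Fin n)) : ℝ :=
  ∑ i, vpd n Y i i x

lemma integral_fderiv_apply_zero {n : ℕ} {g : EuclideanSpace ℝ (Fin n) → ℝ}
    (hg : ContDiff ℝ 1 g) (hcs : HasCompactSupport g) (v : EuclideanSpace ℝ (Fin n)) :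
    ∫ x, fderiv ℝ g x v = 0 := by
  have hc : Continuous fun x => fderiv ℝ g x v := by
    exact (hg.continuous_fderiv one_ne_zero).clm_apply continuous_const
  have hder : HasCompactSupport fun x => fderiv ℝ g x v :=
    (hcs.fderiv ℝ).comp_left (g := fun L : EuclideanSpace ℝ (Fin n) →L[ℝ] ℝ => L v) rfl
  have hint : Integrable (fun x => fderiv ℝ g x v) := hc.integrable_of_hasCompactSupport hder
  have h := integral_mul_fderiv_eq_neg_fderiv_mul_of_integrable
    (μ := volume) (f := fun _ : EuclideanSpace ℝ (Fin n) => (1:ℝ)) (g := g) (v := v)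
    (by simpa [fderiv_const] using (integrable_zero _ _ _))
    (by simpa using hint)
    (by simpa using hg.continuous.integrable_of_hasCompactSupport hcs)
    (fun x _ => differentiableAt_const 1) (fun x _ => hg.differentiable one_ne_zero x)
  simpa [fderiv_const] using h

lemma euclid_decomp {n : ℕ} (x : EuclideanSpace ℝ (Fin n)) :
    ∑ i, x i • EuclideanSpace.single i (1:ℝ) = x := by
  ext j
  rw [WithLp.ofLp_sum, Finset.sum_apply]
  simp [EuclideanSpace.single_apply, PiLp.smul_apply]

lemma clm_eval_decomp {n : ℕ} (L : EuclideanSpace ℝ (Fin n) →L[ℝ] ℝ)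
    (x : EuclideanSpace ℝ (Fin n)) :
    L x = ∑ i, x i * L (EuclideanSpace.single i 1) := by
  conv_lhs => rw [← euclid_decomp x]
  rw [map_sum]
  simp [smul_eq_mul]

/-- Flat-case radial identity for the symmetrized gradient:
`∫ r^{−2s−n+1} S(Y)(x̂,x̂)⟨x̂,Y⟩ = s ∫ r^{−2s−n} ⟨x̂,Y⟩²`
for `Y` of class `C¹` compactly supported away from the origin. -/
theorem radial_symGrad_identity (n : ℕ) (hn : 1 ≤ n) (s : ℝ)
    (Y : EuclideanSpace ℝ (Fin n) → EuclideanSpace ℝ (Fin n))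
    (hY : ContDiff ℝ 1 Y) (hsupp : HasCompactSupport Y)
    (h0 : tsupport Y ⊆ {x : EuclideanSpace ℝ (Fin n) | x ≠ 0}) :
    ∫ x : EuclideanSpace ℝ (Fin n),
        ‖x‖ ^ (-2 * s - (n : ℝ) + 1) *
          (∑ i, ∑ j, symGrad n Y i j x * (x i / ‖x‖) * (x j / ‖x‖)) *
          (∑ i, (x i / ‖x‖) * Y x i)
    = s * ∫ x : EuclideanSpace ℝ (Fin n),
        ‖x‖ ^ (-2 * s - (n : ℝ)) * (∑ i, (x i / ‖x‖) * Y x i) ^ 2 := by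
  set a : ℝ := -2 * s - n - 2 with ha
  set u : EuclideanSpace ℝ (Fin n) → ℝ := fun x => ∑ i, x i * Y x i with hudef
  set w : EuclideanSpace ℝ (Fin n) → ℝ := fun x => fderiv ℝ u x x with hwdef
  set φ : EuclideanSpace ℝ (Fin n) → ℝ :=
    fun x => (‖x‖ ^ 2 : ℝ) ^ (a / 2) * (u x * u x) with hφdef
  set A : EuclideanSpace ℝ (Fin n) → ℝ := fun x => ‖x‖ ^ a * (u x * w x) with hAdef
  set B : EuclideanSpace ℝ (Fin n) → ℝ := fun x => ‖x‖ ^ a * (u x * u x) with hBdef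
  have hproj : ∀ i : Fin n, ContDiff ℝ 1 (fun x : EuclideanSpace ℝ (Fin n) => x i) := fun i =>
    (EuclideanSpace.proj i : EuclideanSpace ℝ (Fin n) →L[ℝ] ℝ).contDiff
  have hYi : ∀ i : Fin n, ContDiff ℝ 1 fun x => Y x i := fun i => (hproj i).comp hY
  have hu : ContDiff ℝ 1 u := ContDiff.sum fun i _ => (hproj i).mul (hYi i)
  have hYz : ∀ x, x ∉ tsupport Y → Y x = 0 := fun x hx => image_eq_zero_of_notMem_tsupport hx
  have hu0 : ∀ x, Y x = 0 → u x = 0 := by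
    intro x hx
    simp [hudef, hx]
  -- ball around 0 where u vanishes
  obtain ⟨ε, hε, hball⟩ : ∃ ε > 0, ∀ y : EuclideanSpace ℝ (Fin n), ‖y‖ < ε → u y = 0 := by
    have h0n : (0 : EuclideanSpace ℝ (Fin n)) ∉ tsupport Y := fun h => (h0 h) rfl
    obtain ⟨ε, hε, hsub⟩ := Metric.isOpen_iff.mp (isClosed_tsupport Y).isOpen_compl 0 h0n
    refine ⟨ε, hε, fun y hy => hu0 y (hYz y ?_)⟩
    exact hsub (by simpa [Metric.mem_ball, dist_zero_right] using hy)
  -- smoothness of φ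
  have hψeq : ∀ x : EuclideanSpace ℝ (Fin n), ((‖x‖ : ℝ) ^ 2) ^ (a / 2) = ‖x‖ ^ a := by
    intro x
    rw [← Real.rpow_natCast ‖x‖ 2, ← Real.rpow_mul (norm_nonneg x)]
    congr 1
    push_cast
    ring
  have hφ : ContDiff ℝ 1 φ := by
    rw [contDiff_iff_contDiffAt]
    intro x
    by_cases hx : x = 0
    · subst hx
      have hev : φ =ᶠ[nhds (0 : EuclideanSpace ℝ (Fin n))] fun _ => 0 := by
        filter_upwards [Metric.ball_mem_nhds 0 hε] with y hy
        have : u y = 0 := hball y (by simpa [mem_ball_zero_iff] using hy)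
        simp [hφdef, this]
      exact contDiffAt_const.congr_of_eventuallyEq hev
    · have hne : (‖x‖ : ℝ) ^ 2 ≠ 0 := pow_ne_zero 2 (norm_ne_zero_iff.mpr hx)
      have h1 : ContDiffAt ℝ 1 (fun y : EuclideanSpace ℝ (Fin n) => ((‖y‖ : ℝ) ^ 2) ^ (a / 2)) x :=
        (Real.contDiffAt_rpow_const_of_ne hne).comp x (contDiff_norm_sq ℝ).contDiffAt
      exact h1.mul (hu.contDiffAt.mul hu.contDiffAt)
  have hcsφ : HasCompactSupport φ :=
    HasCompactSupport.intro hsupp fun x hx => by simp [hφdef, hu0 x (hYz x hx)]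
  have hcsu : HasCompactSupport u :=
    HasCompactSupport.intro hsupp fun x hx => hu0 x (hYz x hx)
  -- the symmetric-gradient sum identity
  have hQ : ∀ x : EuclideanSpace ℝ (Fin n), (∑ i, ∑ j, symGrad n Y i j x * x i * x j)
      = ∑ i, ∑ j, vpd n Y i j x * (x i * x j) := by
    intro x
    have swap : ∑ i, ∑ j, vpd n Y j i x * (x i * x j) = ∑ i, ∑ j, vpd n Y i j x * (x i * x j) := by
      rw [Finset.sum_comm]
      exact Finset.sum_congr rfl fun i _ => Finset.sum_congr rfl fun j _ => by ring
    calc (∑ i, ∑ j, symGrad n Y i j x * x i * x j)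
        = ∑ i, ∑ j, (vpd n Y i j x * (x i * x j) + vpd n Y j i x * (x i * x j)) / 2 :=
          Finset.sum_congr rfl fun i _ => Finset.sum_congr rfl fun j _ => by
            show (vpd n Y i j x + vpd n Y j i x) / 2 * x i * x j = _
            ring
      _ = ((∑ i, ∑ j, vpd n Y i j x * (x i * x j))
            + ∑ i, ∑ j, vpd n Y j i x * (x i * x j)) / 2 := by
          rw [← Finset.sum_add_distrib]
          rw [Finset.sum_div]
          refine Finset.sum_congr rfl fun i _ => ?_
          rw [← Finset.sum_add_distrib, Finset.sum_div]
      _ = ∑ i, ∑ j, vpd n Y i j x * (x i * x j) := by rw [swap]; ring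
  have hw : ∀ x : EuclideanSpace ℝ (Fin n),
      w x = u x + ∑ i, ∑ j, vpd n Y i j x * (x i * x j) := by
    intro x
    have hYx : HasFDerivAt Y (fderiv ℝ Y x) x := (hY.differentiable one_ne_zero x).hasFDerivAt
    have hj : ∀ j : Fin n, HasFDerivAt (fun y => Y y j)
        ((EuclideanSpace.proj j).comp (fderiv ℝ Y x)) x := fun j =>
      (EuclideanSpace.proj j : EuclideanSpace ℝ (Fin n) →L[ℝ] ℝ).hasFDerivAt.comp x hYx
    have hterm : ∀ j : Fin n, HasFDerivAt (fun y : EuclideanSpace ℝ (Fin n) => y j * Y y j)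
        (x j • ((EuclideanSpace.proj j).comp (fderiv ℝ Y x))
          + Y x j • (EuclideanSpace.proj j : EuclideanSpace ℝ (Fin n) →L[ℝ] ℝ)) x := fun j =>
      (EuclideanSpace.proj j : EuclideanSpace ℝ (Fin n) →L[ℝ] ℝ).hasFDerivAt.mul (hj j)
    have hsum : HasFDerivAt u (∑ j, (x j • ((EuclideanSpace.proj j).comp (fderiv ℝ Y x))
        + Y x j • (EuclideanSpace.proj j : EuclideanSpace ℝ (Fin n) →L[ℝ] ℝ))) x :=
      HasFDerivAt.fun_sum fun j _ => hterm j
    have hvpd : ∀ i j : Fin n, vpd n Y i j x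
        = ((EuclideanSpace.proj j).comp (fderiv ℝ Y x)) (EuclideanSpace.single i 1) := by
      intro i j
      rw [vpd, (hj j).fderiv]
    have e1 : w x = ∑ j, (x j * ((EuclideanSpace.proj j).comp (fderiv ℝ Y x)) x
        + Y x j * x j) := by
      simp only [hwdef]
      rw [hsum.fderiv]
      simp [smul_eq_mul]
    have e2 : ∀ j, ((EuclideanSpace.proj j).comp (fderiv ℝ Y x)) x
        = ∑ i, x i * vpd n Y i j x := by
      intro j
      rw [clm_eval_decomp]
      exact Finset.sum_congr rfl fun i _ => by rw [hvpd i j]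
    have e3 : ∑ j, Y x j * x j = u x :=
      Finset.sum_congr rfl fun j _ => mul_comm _ _
    have e4 : ∑ j, x j * ∑ i, x i * vpd n Y i j x
        = ∑ i, ∑ j, vpd n Y i j x * (x i * x j) := by
      rw [Finset.sum_comm]
      refine Finset.sum_congr rfl fun j _ => ?_
      rw [Finset.mul_sum]
      exact Finset.sum_congr rfl fun i _ => by ring
    rw [e1]
    simp only [e2]
    rw [Finset.sum_add_distrib, e3, e4]
    ring
  have hsY : ∀ x : EuclideanSpace ℝ (Fin n), (∑ i, (x i / ‖x‖) * Y x i) = u x / ‖x‖ := by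
    intro x
    rw [hudef]
    simp only
    rw [Finset.sum_div]
    exact Finset.sum_congr rfl fun i _ => div_mul_eq_mul_div _ _ _
  have hu00 : u 0 = 0 := by simp [hudef]
  -- pointwise identities for the two integrands
  have hLpt : ∀ x : EuclideanSpace ℝ (Fin n),
      ‖x‖ ^ (-2 * s - (n : ℝ) + 1) *
          (∑ i, ∑ j, symGrad n Y i j x * (x i / ‖x‖) * (x j / ‖x‖)) *
          (∑ i, (x i / ‖x‖) * Y x i) = A x - B x := by
    intro x
    by_cases hx : x = 0
    · subst hx
      simp [hAdef, hBdef, hu00, hsY]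
    · have hr : (0:ℝ) < ‖x‖ := norm_pos_iff.mpr hx
      have hrne : ‖x‖ ≠ 0 := hr.ne'
      have h2 : (∑ i, ∑ j, symGrad n Y i j x * (x i / ‖x‖) * (x j / ‖x‖))
          = (∑ i, ∑ j, symGrad n Y i j x * x i * x j) / (‖x‖ * ‖x‖) := by
        rw [Finset.sum_div]
        refine Finset.sum_congr rfl fun i _ => ?_
        rw [Finset.sum_div]
        refine Finset.sum_congr rfl fun j _ => ?_
        field_simp
        try ring
      rw [hsY, h2, hQ x]
      have h3 : ∑ i, ∑ j, vpd n Y i j x * (x i * x j) = w x - u x := by rw [hw x]; ring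
      rw [h3]
      have h4 : ‖x‖ ^ (-2 * s - (n:ℝ) + 1) = ‖x‖ ^ a * (‖x‖ * (‖x‖ * ‖x‖)) := by
        rw [show (-2 * s - (n:ℝ) + 1) = a + 3 by rw [ha]; ring, Real.rpow_add hr]
        congr 1
        rw [show (3:ℝ) = ((3:ℕ):ℝ) by norm_num, Real.rpow_natCast]
        ring
      rw [h4, hAdef, hBdef]
      simp only
      field_simp
  have hRpt : ∀ x : EuclideanSpace ℝ (Fin n),
      ‖x‖ ^ (-2 * s - (n : ℝ)) * (∑ i, (x i / ‖x‖) * Y x i) ^ 2 = B x := by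
    intro x
    by_cases hx : x = 0
    · subst hx
      simp [hBdef, hu00, hsY]
    · have hr : (0:ℝ) < ‖x‖ := norm_pos_iff.mpr hx
      have hrne : ‖x‖ ≠ 0 := hr.ne'
      rw [hsY]
      have h4 : ‖x‖ ^ (-2 * s - (n:ℝ)) = ‖x‖ ^ a * (‖x‖ * ‖x‖) := by
        rw [show (-2 * s - (n:ℝ)) = a + 2 by rw [ha]; ring, Real.rpow_add hr]
        congr 1
        rw [show (2:ℝ) = ((2:ℕ):ℝ) by norm_num, Real.rpow_natCast]
        ring
      rw [h4, hBdef]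
      simp only
      field_simp
  -- integrability of A and B
  have hInt : ∀ F : EuclideanSpace ℝ (Fin n) → ℝ, Continuous F →
      (∀ x, x ∉ tsupport u → F x = 0) → Integrable F := by
    intro F hF hFz
    exact hF.integrable_of_hasCompactSupport (HasCompactSupport.intro hcsu hFz)
  have hwcont : Continuous w :=
    (hu.continuous_fderiv one_ne_zero).clm_apply continuous_id
  have hrpow_cont : ∀ v : EuclideanSpace ℝ (Fin n) → ℝ, Continuous v →
      Continuous (fun x : EuclideanSpace ℝ (Fin n) => ‖x‖ ^ a * (u x * v x)) := by
    intro v hv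
    rw [continuous_iff_continuousAt]
    intro x
    by_cases hx : x = 0
    · subst hx
      have hev : (fun x : EuclideanSpace ℝ (Fin n) => ‖x‖ ^ a * (u x * v x))
          =ᶠ[nhds (0 : EuclideanSpace ℝ (Fin n))] fun _ => 0 := by
        filter_upwards [Metric.ball_mem_nhds 0 hε] with y hy
        simp [hball y (by simpa [mem_ball_zero_iff] using hy)]
      exact continuousAt_const.congr hev.symm
    · have h1 : ContinuousAt (fun y : EuclideanSpace ℝ (Fin n) => ‖y‖ ^ a) x :=
        (Real.continuousAt_rpow_const _ _ (Or.inl (norm_ne_zero_iff.mpr hx))).comp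
          continuous_norm.continuousAt
      exact h1.mul (hu.continuous.continuousAt.mul hv.continuousAt)
  have hAcont : Continuous A := hrpow_cont w hwcont
  have hBcont : Continuous B := hrpow_cont u hu.continuous
  have hAz : ∀ x, x ∉ tsupport u → A x = 0 := fun x hx => by
    simp [hAdef, image_eq_zero_of_notMem_tsupport hx]
  have hBz : ∀ x, x ∉ tsupport u → B x = 0 := fun x hx => by
    simp [hBdef, image_eq_zero_of_notMem_tsupport hx]
  have hAint : Integrable A := hInt A hAcont hAz
  have hBint : Integrable B := hInt B hBcont hBz
  -- the divergence identity : ∫ (fderiv φ x x + n * φ x) = 0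
  have hdiv : ∫ x : EuclideanSpace ℝ (Fin n), (fderiv ℝ φ x x + n * φ x) = 0 := by
    set g : Fin n → EuclideanSpace ℝ (Fin n) → ℝ := fun i x => φ x * x i with hgdef
    have hg : ∀ i, ContDiff ℝ 1 (g i) := fun i => hφ.mul (hproj i)
    have hgcs : ∀ i, HasCompactSupport (g i) := fun i =>
      HasCompactSupport.intro hcsφ fun x hx => by
        simp [hgdef, image_eq_zero_of_notMem_tsupport hx]
    have hzero : ∀ i, ∫ x, fderiv ℝ (g i) x (EuclideanSpace.single i 1) = 0 := fun i =>
      integral_fderiv_apply_zero (hg i) (hgcs i) _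
    have hint : ∀ i, Integrable fun x => fderiv ℝ (g i) x (EuclideanSpace.single i 1) := fun i =>
      (((hg i).continuous_fderiv one_ne_zero).clm_apply continuous_const).integrable_of_hasCompactSupport
        (((hgcs i).fderiv ℝ).comp_left
          (g := fun L : EuclideanSpace ℝ (Fin n) →L[ℝ] ℝ => L (EuclideanSpace.single i 1)) rfl)
    have hsumint : ∫ x : EuclideanSpace ℝ (Fin n),
        (∑ i, fderiv ℝ (g i) x (EuclideanSpace.single i 1)) = 0 := by
      rw [integral_finset_sum _ fun i _ => hint i]
      simp [hzero]
    have hpt : ∀ x : EuclideanSpace ℝ (Fin n),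
        (∑ i, fderiv ℝ (g i) x (EuclideanSpace.single i 1)) = fderiv ℝ φ x x + n * φ x := by
      intro x
      have hφd : DifferentiableAt ℝ φ x := hφ.differentiable one_ne_zero x
      have hco : ∀ i : Fin n, fderiv ℝ (g i) x
          = φ x • (EuclideanSpace.proj i : EuclideanSpace ℝ (Fin n) →L[ℝ] ℝ)
            + x i • fderiv ℝ φ x := by
        intro i
        have hd : DifferentiableAt ℝ (fun y : EuclideanSpace ℝ (Fin n) => y i) x :=
          (EuclideanSpace.proj i : EuclideanSpace ℝ (Fin n) →L[ℝ] ℝ).differentiableAt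
        have h := fderiv_mul hφd hd
        have hpr : fderiv ℝ (fun y : EuclideanSpace ℝ (Fin n) => y i) x
            = (EuclideanSpace.proj i : EuclideanSpace ℝ (Fin n) →L[ℝ] ℝ) :=
          (EuclideanSpace.proj i : EuclideanSpace ℝ (Fin n) →L[ℝ] ℝ).fderiv
        rw [hpr] at h
        exact h
      have step1 : (∑ i, fderiv ℝ (g i) x (EuclideanSpace.single i 1))
          = ∑ i, (φ x + x i * fderiv ℝ φ x (EuclideanSpace.single i 1)) := by
        refine Finset.sum_congr rfl fun i _ => ?_
        rw [hco i]
        simp [smul_eq_mul, EuclideanSpace.single_apply]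
      rw [step1, Finset.sum_add_distrib]
      rw [clm_eval_decomp (fderiv ℝ φ x) x]
      simp only [Finset.sum_const, Finset.card_univ, smul_eq_mul, nsmul_eq_mul, Fintype.card_fin]
      rw [add_comm]
    calc ∫ x : EuclideanSpace ℝ (Fin n), (fderiv ℝ φ x x + n * φ x)
        = ∫ x : EuclideanSpace ℝ (Fin n),
            (∑ i, fderiv ℝ (g i) x (EuclideanSpace.single i 1)) :=
          integral_congr_ae (Filter.Eventually.of_forall fun x => (hpt x).symm)
      _ = 0 := hsumint
  -- pointwise: fderiv φ x x + n φ x = (a+n) B x + 2 A x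
  have hdivpt : ∀ x : EuclideanSpace ℝ (Fin n),
      fderiv ℝ φ x x + n * φ x = (a + n) * B x + 2 * A x := by
    intro x
    by_cases hx : x = 0
    · subst hx
      have hφ0 : φ 0 = 0 := by simp [hφdef, hu00]
      simp [hAdef, hBdef, hu00, hφ0]
    · have hrne : ‖x‖ ≠ 0 := norm_ne_zero_iff.mpr hx
      have hrpos : (0:ℝ) < ‖x‖ := norm_pos_iff.mpr hx
      have hsq : ((‖x‖ : ℝ) ^ 2) ≠ 0 := pow_ne_zero 2 hrne
      have hsqpos : (0:ℝ) < (‖x‖ : ℝ) ^ 2 := by positivity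
      have hn1 : HasFDerivAt (fun y : EuclideanSpace ℝ (Fin n) => ((‖y‖ : ℝ) ^ 2))
          (2 • (innerSL ℝ x)) x := (hasStrictFDerivAt_norm_sq x).hasFDerivAt
      have hpow : HasFDerivAt (fun y : EuclideanSpace ℝ (Fin n) => ((‖y‖ : ℝ) ^ 2) ^ (a / 2))
          ((a / 2 * ((‖x‖ : ℝ) ^ 2) ^ (a / 2 - 1)) • (2 • (innerSL ℝ x))) x :=
        HasFDerivAt.rpow_const hn1 (Or.inl hsq)
      have hux : HasFDerivAt u (fderiv ℝ u x) x := (hu.differentiable one_ne_zero x).hasFDerivAt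
      have huu : HasFDerivAt (fun y => u y * u y)
          (u x • fderiv ℝ u x + u x • fderiv ℝ u x) x := hux.mul hux
      have hφx : HasFDerivAt φ
          ((((‖x‖ : ℝ) ^ 2) ^ (a / 2)) • (u x • fderiv ℝ u x + u x • fderiv ℝ u x)
            + (u x * u x) • ((a / 2 * ((‖x‖ : ℝ) ^ 2) ^ (a / 2 - 1)) • (2 • (innerSL ℝ x)))) x :=
        hpow.mul huu
      have hred : ((‖x‖ : ℝ) ^ 2) ^ (a / 2 - 1) * (‖x‖ : ℝ) ^ 2 = ((‖x‖ : ℝ) ^ 2) ^ (a / 2) := by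
        rw [show (a / 2 - 1) = a / 2 + (-1) by ring, Real.rpow_add hsqpos, Real.rpow_neg_one]
        field_simp
      have hval : fderiv ℝ φ x x
          = ((‖x‖ : ℝ) ^ 2) ^ (a / 2) * (u x * w x + u x * w x)
            + (u x * u x) * (a / 2 * ((‖x‖ : ℝ) ^ 2) ^ (a / 2 - 1) * (2 * (‖x‖ : ℝ) ^ 2)) := by
        rw [hφx.fderiv]
        simp only [ContinuousLinearMap.add_apply, ContinuousLinearMap.coe_smul', Pi.smul_apply,
          ContinuousLinearMap.smul_apply, innerSL_apply_apply, smul_eq_mul, two_smul,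
          ContinuousLinearMap.add_apply]
        rw [real_inner_self_eq_norm_sq]
        have hwx : (fderiv ℝ u x) x = w x := rfl
        rw [hwx]
        ring
      rw [hval, hφdef, hAdef, hBdef]
      simp only
      linear_combination (u x * u x * a) * hred + (2 * (u x * w x) + u x * u x * (a + n)) * hψeq x
  -- conclude
  have hIB : ∫ x, A x = (s + 1) * ∫ x, B x := by
    have h1 : ∫ x : EuclideanSpace ℝ (Fin n), ((a + n) * B x + 2 * A x) = 0 := by
      rw [← hdiv]; exact integral_congr_ae (Filter.Eventually.of_forall fun x => (hdivpt x).symm)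
    rw [integral_add ((hBint.const_mul _)) ((hAint.const_mul _)),
      integral_const_mul, integral_const_mul] at h1
    have han : a + n = -2 * s - 2 := by rw [ha]; ring
    rw [han] at h1
    linarith
  calc ∫ x : EuclideanSpace ℝ (Fin n), ‖x‖ ^ (-2 * s - (n : ℝ) + 1) *
          (∑ i, ∑ j, symGrad n Y i j x * (x i / ‖x‖) * (x j / ‖x‖)) *
          (∑ i, (x i / ‖x‖) * Y x i)
      = ∫ x : EuclideanSpace ℝ (Fin n), (A x - B x) :=
        integral_congr_ae (Filter.Eventually.of_forall fun x => hLpt x)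
    _ = (∫ x, A x) - ∫ x, B x := integral_sub hAint hBint
    _ = s * ∫ x, B x := by rw [hIB]; ring
    _ = s * ∫ x : EuclideanSpace ℝ (Fin n),
          ‖x‖ ^ (-2 * s - (n : ℝ)) * (∑ i, (x i / ‖x‖) * Y x i) ^ 2 := by
        rw [integral_congr_ae (Filter.Eventually.of_forall fun x => hRpt x)]
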